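/- Let K ⊂ ℝ² be compact and let B ⊂ ℝ² be a bounded open set with K ⊂ B. Let μ be a probability measure on ℝ² with support contained in K and assume the logarithmic energy is finite: −∫∫ log|y−z| d(μ⊗μ)(y,z) < +∞. Then the function β(y,z) := ∫_B ((x−y)/|x−y|²) · ((x−z)/|x−z|²) dx belongs to L¹(B×B, μ⊗μ), i.e. ∫∫ |β(y,z)| d(μ⊗μ)(y,z) < +∞. -/

import Mathlib

open MeasureTheory
open scoped RealInnerProductSpace ENNReal

noncomputable section
namespace Stmt4Aux
open MeasureTheory Metric Set
open scoped ENNReal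

abbrev E2 := EuclideanSpace ℝ (Fin 2)

def V : ℝ≥0∞ := volume (ball (0 : E2) 1)

lemma V_lt_top : V < ⊤ := measure_ball_lt_top
lemma V_ne_top : V ≠ ⊤ := V_lt_top.ne
lemma V_ne_zero : V ≠ 0 := (measure_ball_pos _ _ one_pos).ne'

lemma vol_ball (c : E2) {r : ℝ} (hr : 0 ≤ r) :
    volume (ball c r) = ENNReal.ofReal (r ^ 2) * V := by
  rw [Measure.addHaar_ball volume c hr, finrank_euclideanSpace_fin]; rfl

lemma vol_closedBall (c : E2) {r : ℝ} (hr : 0 ≤ r) :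
    volume (closedBall c r) = ENNReal.ofReal (r ^ 2) * V := by
  rw [Measure.addHaar_closedBall volume c hr, finrank_euclideanSpace_fin]; rfl

lemma ring_bound (c : E2) {a b : ℝ} (ha : 0 < a) (hb : 0 ≤ b) (k : ℕ)
    {s : Set E2} (hs : MeasurableSet s) (h1 : ∀ x ∈ s, a ≤ ‖x - c‖)
    (h2 : s ⊆ closedBall c b) :
    ∫⁻ x in s, ((‖x - c‖₊ : ℝ≥0∞))⁻¹ ^ k ∂volume
      ≤ (ENNReal.ofReal a)⁻¹ ^ k * (ENNReal.ofReal (b ^ 2) * V) := by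
  calc ∫⁻ x in s, ((‖x - c‖₊ : ℝ≥0∞))⁻¹ ^ k ∂volume
      ≤ ∫⁻ _x in s, (ENNReal.ofReal a)⁻¹ ^ k ∂volume := by
        refine setLIntegral_mono' hs fun x hx => ?_
        have : ENNReal.ofReal a ≤ (‖x - c‖₊ : ℝ≥0∞) := by
          rw [← enorm_eq_nnnorm, ← ofReal_norm]
          exact ENNReal.ofReal_le_ofReal (h1 x hx)
        exact pow_le_pow_left' (ENNReal.inv_le_inv.mpr this) _
    _ = (ENNReal.ofReal a)⁻¹ ^ k * volume s := setLIntegral_const s _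
    _ ≤ (ENNReal.ofReal a)⁻¹ ^ k * (ENNReal.ofReal (b ^ 2) * V) := by
        refine mul_le_mul_right ?_ _
        rw [← vol_closedBall c hb]
        exact measure_mono h2


lemma dyadic_mem (t s : ℝ) (ht0 : 0 < t) (hts : t < s) :
    ∃ n : ℕ, t ≤ s / 2 ^ n ∧ s / 2 ^ (n + 1) < t := by
  have hs0 : 0 < s := ht0.trans hts
  have h1 : 1 < s / t := (one_lt_div ht0).mpr hts
  set u := Real.logb 2 (s / t) with hu
  have hu0 : 0 ≤ u := Real.logb_nonneg one_lt_two h1.le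
  refine ⟨⌊u⌋₊, ?_, ?_⟩
  · have hl : (2 : ℝ) ^ (⌊u⌋₊ : ℕ) ≤ s / t := by
      calc (2 : ℝ) ^ (⌊u⌋₊ : ℕ) = (2 : ℝ) ^ ((⌊u⌋₊ : ℕ) : ℝ) := by
            rw [Real.rpow_natCast]
        _ ≤ (2 : ℝ) ^ u := Real.rpow_le_rpow_of_exponent_le one_le_two (Nat.floor_le hu0)
        _ = s / t := Real.rpow_logb two_pos (by norm_num) (by positivity)
    rw [le_div_iff₀ (by positivity)]
    rw [le_div_iff₀ ht0] at hl
    linarith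
  · have hr : s / t < (2 : ℝ) ^ (⌊u⌋₊ + 1 : ℕ) := by
      calc s / t = (2 : ℝ) ^ u := (Real.rpow_logb two_pos (by norm_num) (by positivity)).symm
        _ < (2 : ℝ) ^ ((⌊u⌋₊ + 1 : ℕ) : ℝ) := by
            apply Real.rpow_lt_rpow_of_exponent_lt one_lt_two
            push_cast
            exact Nat.lt_floor_add_one u
        _ = (2 : ℝ) ^ (⌊u⌋₊ + 1 : ℕ) := by rw [Real.rpow_natCast]
    rw [div_lt_iff₀ (by positivity)]
    rw [div_lt_iff₀ ht0] at hr
    linarith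

lemma ball_inv_bound (c : E2) {s : ℝ} (hs : 0 < s) :
    ∫⁻ x in ball c s, ((‖x - c‖₊ : ℝ≥0∞))⁻¹ ∂volume ≤ ENNReal.ofReal s * (4 * V) := by
  set A : ℕ → Set E2 := fun n => closedBall c (s / 2 ^ n) \ ball c (s / 2 ^ (n + 1)) with hA
  have hcover : ball c s \ {c} ⊆ ⋃ n, A n := by
    intro x hx
    have hxc : x ≠ c := hx.2
    have ht0 : 0 < ‖x - c‖ := by
      rw [norm_pos_iff, sub_ne_zero]; exact hxc
    have hts : ‖x - c‖ < s := by
      have := hx.1; rwa [mem_ball, dist_eq_norm] at this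
    obtain ⟨n, h1, h2⟩ := dyadic_mem _ _ ht0 hts
    refine mem_iUnion.mpr ⟨n, ?_, ?_⟩
    · rw [mem_closedBall, dist_eq_norm]; exact h1
    · rw [mem_ball, dist_eq_norm]; push_neg; exact h2.le
  have hterm : ∀ n : ℕ, ∫⁻ x in A n, ((‖x - c‖₊ : ℝ≥0∞))⁻¹ ∂volume
      ≤ ENNReal.ofReal (2 * s) * (ENNReal.ofReal (1/2)) ^ n * V := by
    intro n
    have hb := ring_bound c (a := s / 2 ^ (n+1)) (b := s / 2 ^ n) (by positivity)
      (by positivity) 1 (measurableSet_closedBall.diff measurableSet_ball)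
      (fun x hx => by
        have := hx.2; rw [mem_ball, dist_eq_norm] at this; push_neg at this; exact this)
      diff_subset
    simp only [pow_one] at hb
    refine hb.trans (le_of_eq ?_)
    have key : (s / 2 ^ n) ^ 2 = (s / 2 ^ (n + 1)) * (2 * s * (1/2) ^ n) := by
      rw [one_div, inv_pow, pow_succ]
      field_simp
      ring
    rw [key, ENNReal.ofReal_mul (by positivity), ← mul_assoc, ← mul_assoc,
      ENNReal.inv_mul_cancel (by positivity) ENNReal.ofReal_ne_top, one_mul,
      ENNReal.ofReal_mul (by positivity), ENNReal.ofReal_pow (by norm_num)]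
  have hhalf : ENNReal.ofReal (1/2 : ℝ) = 2⁻¹ := by
    rw [show (1/2 : ℝ) = 2⁻¹ by norm_num, ENNReal.ofReal_inv_of_pos two_pos,
      ENNReal.ofReal_ofNat]
  calc ∫⁻ x in ball c s, ((‖x - c‖₊ : ℝ≥0∞))⁻¹ ∂volume
      ≤ ∫⁻ x in (ball c s \ {c}) ∪ {c}, ((‖x - c‖₊ : ℝ≥0∞))⁻¹ ∂volume :=
        lintegral_mono_set (Set.subset_diff_union _ _)
    _ ≤ ∫⁻ x in ball c s \ {c}, ((‖x - c‖₊ : ℝ≥0∞))⁻¹ ∂volume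
        + ∫⁻ x in ({c} : Set E2), ((‖x - c‖₊ : ℝ≥0∞))⁻¹ ∂volume :=
        lintegral_union_le _ _ _
    _ = ∫⁻ x in ball c s \ {c}, ((‖x - c‖₊ : ℝ≥0∞))⁻¹ ∂volume := by
        rw [setLIntegral_measure_zero _ _ (measure_singleton c), add_zero]
    _ ≤ ∫⁻ x in ⋃ n, A n, ((‖x - c‖₊ : ℝ≥0∞))⁻¹ ∂volume := lintegral_mono_set hcover
    _ ≤ ∑' n, ∫⁻ x in A n, ((‖x - c‖₊ : ℝ≥0∞))⁻¹ ∂volume := lintegral_iUnion_le _ _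
    _ ≤ ∑' n, ENNReal.ofReal (2 * s) * (ENNReal.ofReal (1/2)) ^ n * V :=
        ENNReal.tsum_le_tsum hterm
    _ = ENNReal.ofReal (2 * s) * V * ∑' n, (ENNReal.ofReal (1/2) : ℝ≥0∞) ^ n := by
        rw [← ENNReal.tsum_mul_left]
        congr 1; ext n; ring
    _ = ENNReal.ofReal (2 * s) * V * 2 := by
        rw [hhalf, ENNReal.tsum_geometric, ENNReal.one_sub_inv_two, inv_inv]
    _ = ENNReal.ofReal s * (4 * V) := by
        rw [ENNReal.ofReal_mul (by norm_num), ENNReal.ofReal_ofNat]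
        ring


lemma dyadic_mem' (a t : ℝ) (ha : 0 < a) (hat : a ≤ t) :
    ∃ n : ℕ, (n : ℝ) ≤ Real.logb 2 (t / a) ∧ a * 2 ^ n ≤ t ∧ t < a * 2 ^ (n + 1) := by
  have h1 : 1 ≤ t / a := (one_le_div ha).mpr hat
  set u := Real.logb 2 (t / a) with hu
  have hu0 : 0 ≤ u := Real.logb_nonneg one_lt_two h1
  refine ⟨⌊u⌋₊, Nat.floor_le hu0, ?_, ?_⟩
  · have hl : (2 : ℝ) ^ (⌊u⌋₊ : ℕ) ≤ t / a := by
      calc (2 : ℝ) ^ (⌊u⌋₊ : ℕ) = (2 : ℝ) ^ ((⌊u⌋₊ : ℕ) : ℝ) := by rw [Real.rpow_natCast]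
        _ ≤ (2 : ℝ) ^ u := Real.rpow_le_rpow_of_exponent_le one_le_two (Nat.floor_le hu0)
        _ = t / a := Real.rpow_logb two_pos (by norm_num) (by positivity)
    rw [le_div_iff₀ ha] at hl
    linarith
  · have hr : t / a < (2 : ℝ) ^ (⌊u⌋₊ + 1 : ℕ) := by
      calc t / a = (2 : ℝ) ^ u := (Real.rpow_logb two_pos (by norm_num) (by positivity)).symm
        _ < (2 : ℝ) ^ ((⌊u⌋₊ + 1 : ℕ) : ℝ) := by
            apply Real.rpow_lt_rpow_of_exponent_lt one_lt_two
            push_cast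
            exact Nat.lt_floor_add_one u
        _ = (2 : ℝ) ^ (⌊u⌋₊ + 1 : ℕ) := by rw [Real.rpow_natCast]
    rw [div_lt_iff₀ ha] at hr
    linarith

lemma annulus_sq_bound (c : E2) {a b : ℝ} (ha : 0 < a) (hab : a ≤ b)
    {s : Set E2} (hs : MeasurableSet s) (h1 : ∀ x ∈ s, a ≤ ‖x - c‖)
    (h2 : s ⊆ closedBall c b) :
    ∫⁻ x in s, ((‖x - c‖₊ : ℝ≥0∞))⁻¹ ^ 2 ∂volume
      ≤ (⌈Real.logb 2 (b / a)⌉₊ + 1 : ℕ) * (4 * V) := by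
  set N := ⌈Real.logb 2 (b / a)⌉₊ with hN
  set A : ℕ → Set E2 := fun n => closedBall c (a * 2 ^ (n + 1)) \ ball c (a * 2 ^ n) with hA
  have hcover : s ⊆ ⋃ i : Fin (N + 1), A i := by
    intro x hx
    have hax : a ≤ ‖x - c‖ := h1 x hx
    obtain ⟨n, hn1, hn2, hn3⟩ := dyadic_mem' a ‖x - c‖ ha hax
    have hnN : n ≤ N := by
      have hxb : ‖x - c‖ ≤ b := by
        have := h2 hx; rwa [mem_closedBall, dist_eq_norm] at this
      have hlog : Real.logb 2 (‖x - c‖ / a) ≤ Real.logb 2 (b / a) :=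
        Real.logb_le_logb_of_le one_lt_two (div_pos (lt_of_lt_of_le ha hax) ha)
          (by gcongr)
      have : (n : ℝ) ≤ (N : ℝ) := le_trans hn1 (hlog.trans (Nat.le_ceil _))
      exact_mod_cast this
    refine mem_iUnion.mpr ⟨⟨n, Nat.lt_succ_of_le hnN⟩, ?_, ?_⟩
    · rw [mem_closedBall, dist_eq_norm]; exact hn3.le
    · rw [mem_ball, dist_eq_norm]; push_neg; exact hn2
  have hterm : ∀ n : ℕ, ∫⁻ x in A n, ((‖x - c‖₊ : ℝ≥0∞))⁻¹ ^ 2 ∂volume ≤ 4 * V := by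
    intro n
    have hb := ring_bound c (a := a * 2 ^ n) (b := a * 2 ^ (n + 1)) (by positivity)
      (by positivity) 2 (measurableSet_closedBall.diff measurableSet_ball)
      (fun x hx => by
        have := hx.2; rw [mem_ball, dist_eq_norm] at this; push_neg at this; exact this)
      diff_subset
    refine hb.trans (le_of_eq ?_)
    have key : (a * 2 ^ (n + 1)) ^ 2 = (a * 2 ^ n) ^ 2 * 4 := by ring
    set q := ENNReal.ofReal (a * 2 ^ n) with hq
    have hq0 : q ≠ 0 := (ENNReal.ofReal_pos.mpr (by positivity)).ne'
    have hqt : q ≠ ⊤ := ENNReal.ofReal_ne_top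
    have h4 : ENNReal.ofReal ((a * 2 ^ (n + 1)) ^ 2) = q ^ 2 * 4 := by
      rw [key, ENNReal.ofReal_mul (by positivity),
        ENNReal.ofReal_pow (by positivity), ENNReal.ofReal_ofNat]
    rw [h4]
    have : q⁻¹ ^ 2 * (q ^ 2 * 4 * V) = (q⁻¹ * q) ^ 2 * (4 * V) := by ring
    rw [this, ENNReal.inv_mul_cancel hq0 hqt, one_pow, one_mul]
  calc ∫⁻ x in s, ((‖x - c‖₊ : ℝ≥0∞))⁻¹ ^ 2 ∂volume
      ≤ ∫⁻ x in ⋃ i : Fin (N + 1), A i, ((‖x - c‖₊ : ℝ≥0∞))⁻¹ ^ 2 ∂volume :=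
        lintegral_mono_set hcover
    _ ≤ ∑' i : Fin (N + 1), ∫⁻ x in A i, ((‖x - c‖₊ : ℝ≥0∞))⁻¹ ^ 2 ∂volume :=
        lintegral_iUnion_le _ _
    _ ≤ ∑' _i : Fin (N + 1), (4 * V : ℝ≥0∞) := ENNReal.tsum_le_tsum fun i => hterm i
    _ = (N + 1 : ℕ) * (4 * V) := by
        rw [tsum_fintype]
        simp [Finset.sum_const, nsmul_eq_mul]


lemma ennreal_mul_le_sq_add (u v : ℝ≥0∞) : u * v ≤ u ^ 2 + v ^ 2 := by
  rcases le_total u v with h | h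
  · calc u * v ≤ v * v := mul_le_mul_left h v
      _ = v ^ 2 := (sq v).symm
      _ ≤ u ^ 2 + v ^ 2 := le_add_self
  · calc u * v ≤ u * u := mul_le_mul_right h u
      _ = u ^ 2 := (sq u).symm
      _ ≤ u ^ 2 + v ^ 2 := le_self_add

lemma pointwise_bound {B : Set E2} (hBm : MeasurableSet B) {y z : E2} {R : ℝ}
    (hR : 1 ≤ R) (hB : B ⊆ ball (0 : E2) R) (hy : y ∈ ball (0 : E2) R)
    (hz : z ∈ ball (0 : E2) R) (hyz : y ≠ z) :
    ∫⁻ x in B, ((‖x - y‖₊ : ℝ≥0∞))⁻¹ * ((‖x - z‖₊ : ℝ≥0∞))⁻¹ ∂volume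
      ≤ ENNReal.ofReal (Real.log (4 * R) / Real.log 2 + 3
          + (Real.log 2)⁻¹ * |Real.log ‖y - z‖|) * (8 * V) := by
  have hyR : ‖y‖ < R := mem_ball_zero_iff.mp hy
  have hzR : ‖z‖ < R := mem_ball_zero_iff.mp hz
  set d := ‖y - z‖ with hd_def
  have hd : 0 < d := norm_pos_iff.mpr (sub_ne_zero.mpr hyz)
  have hdR : d < 2 * R := by
    have := norm_sub_le y z; simp only [← hd_def] at this; linarith
  set a := d / 2 with ha_def
  have ha : 0 < a := by positivity
  have hoa0 : ENNReal.ofReal a ≠ 0 := (ENNReal.ofReal_pos.mpr ha).ne'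
  have hoat : ENNReal.ofReal a ≠ ⊤ := ENNReal.ofReal_ne_top
  have humeas : ∀ w : E2, Measurable fun x : E2 => ((‖x - w‖₊ : ℝ≥0∞))⁻¹ := fun w =>
    ((measurable_id.sub measurable_const).nnnorm.coe_nnreal_ennreal).inv
  set M := ⌈Real.logb 2 (2 * R / a)⌉₊ with hM
  -- piece 1
  have hP1 : ∫⁻ x in ball y a, ((‖x - y‖₊ : ℝ≥0∞))⁻¹ * ((‖x - z‖₊ : ℝ≥0∞))⁻¹ ∂volume
      ≤ 4 * V := by
    calc ∫⁻ x in ball y a, ((‖x - y‖₊ : ℝ≥0∞))⁻¹ * ((‖x - z‖₊ : ℝ≥0∞))⁻¹ ∂volume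
        ≤ ∫⁻ x in ball y a, ((‖x - y‖₊ : ℝ≥0∞))⁻¹ * (ENNReal.ofReal a)⁻¹ ∂volume := by
          refine setLIntegral_mono' measurableSet_ball fun x hx => ?_
          refine mul_le_mul_right (ENNReal.inv_le_inv.mpr ?_) _
          rw [← enorm_eq_nnnorm, ← ofReal_norm]
          refine ENNReal.ofReal_le_ofReal ?_
          have hxy : ‖x - y‖ < a := by
            have := hx; rwa [mem_ball, dist_eq_norm] at this
          have htri : d ≤ ‖y - x‖ + ‖x - z‖ := by
            have := norm_sub_le_norm_sub_add_norm_sub y x z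
            simpa [← hd_def] using this
          have : ‖y - x‖ = ‖x - y‖ := norm_sub_rev y x
          linarith [ha_def ▸ hxy]
      _ = (∫⁻ x in ball y a, ((‖x - y‖₊ : ℝ≥0∞))⁻¹ ∂volume) * (ENNReal.ofReal a)⁻¹ :=
          lintegral_mul_const _ (humeas y)
      _ ≤ (ENNReal.ofReal a * (4 * V)) * (ENNReal.ofReal a)⁻¹ :=
          mul_le_mul_left (ball_inv_bound y ha) _
      _ = 4 * V := by
          rw [mul_comm, ← mul_assoc, ENNReal.inv_mul_cancel hoa0 hoat, one_mul]
  -- piece 2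
  have hP2 : ∫⁻ x in ball z a, ((‖x - y‖₊ : ℝ≥0∞))⁻¹ * ((‖x - z‖₊ : ℝ≥0∞))⁻¹ ∂volume
      ≤ 4 * V := by
    calc ∫⁻ x in ball z a, ((‖x - y‖₊ : ℝ≥0∞))⁻¹ * ((‖x - z‖₊ : ℝ≥0∞))⁻¹ ∂volume
        ≤ ∫⁻ x in ball z a, (ENNReal.ofReal a)⁻¹ * ((‖x - z‖₊ : ℝ≥0∞))⁻¹ ∂volume := by
          refine setLIntegral_mono' measurableSet_ball fun x hx => ?_
          refine mul_le_mul_left (ENNReal.inv_le_inv.mpr ?_) _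
          rw [← enorm_eq_nnnorm, ← ofReal_norm]
          refine ENNReal.ofReal_le_ofReal ?_
          have hxz : ‖x - z‖ < a := by
            have := hx; rwa [mem_ball, dist_eq_norm] at this
          have htri : d ≤ ‖y - x‖ + ‖x - z‖ := by
            have := norm_sub_le_norm_sub_add_norm_sub y x z
            simpa [← hd_def] using this
          have : ‖y - x‖ = ‖x - y‖ := norm_sub_rev y x
          linarith [ha_def ▸ hxz]
      _ = (ENNReal.ofReal a)⁻¹ * ∫⁻ x in ball z a, ((‖x - z‖₊ : ℝ≥0∞))⁻¹ ∂volume :=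
          lintegral_const_mul _ (humeas z)
      _ ≤ (ENNReal.ofReal a)⁻¹ * (ENNReal.ofReal a * (4 * V)) :=
          mul_le_mul_right (ball_inv_bound z ha) _
      _ = 4 * V := by
          rw [← mul_assoc, ENNReal.inv_mul_cancel hoa0 hoat, one_mul]
  -- piece 3
  set S3 := B \ (ball y a ∪ ball z a) with hS3
  have hS3m : MeasurableSet S3 := hBm.diff (measurableSet_ball.union measurableSet_ball)
  have haR : a ≤ 2 * R := by linarith
  have hsq : ∀ w : E2, w ∈ ball (0 : E2) R → (∀ x ∈ S3, a ≤ ‖x - w‖) →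
      ∫⁻ x in S3, ((‖x - w‖₊ : ℝ≥0∞))⁻¹ ^ 2 ∂volume ≤ (M + 1 : ℕ) * (4 * V) := by
    intro w hw h1
    refine annulus_sq_bound w ha haR hS3m h1 fun x hx => ?_
    have hxB : x ∈ B := hx.1
    have : ‖x‖ < R := mem_ball_zero_iff.mp (hB hxB)
    have hwR : ‖w‖ < R := mem_ball_zero_iff.mp hw
    rw [mem_closedBall, dist_eq_norm]
    calc ‖x - w‖ ≤ ‖x‖ + ‖w‖ := norm_sub_le x w
      _ ≤ 2 * R := by linarith
  have hP3 : ∫⁻ x in S3, ((‖x - y‖₊ : ℝ≥0∞))⁻¹ * ((‖x - z‖₊ : ℝ≥0∞))⁻¹ ∂volume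
      ≤ (M + 1 : ℕ) * (4 * V) + (M + 1 : ℕ) * (4 * V) := by
    calc ∫⁻ x in S3, ((‖x - y‖₊ : ℝ≥0∞))⁻¹ * ((‖x - z‖₊ : ℝ≥0∞))⁻¹ ∂volume
        ≤ ∫⁻ x in S3, (((‖x - y‖₊ : ℝ≥0∞))⁻¹ ^ 2 + ((‖x - z‖₊ : ℝ≥0∞))⁻¹ ^ 2) ∂volume :=
          setLIntegral_mono' hS3m fun x _ => ennreal_mul_le_sq_add _ _
      _ = (∫⁻ x in S3, ((‖x - y‖₊ : ℝ≥0∞))⁻¹ ^ 2 ∂volume)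
          + ∫⁻ x in S3, ((‖x - z‖₊ : ℝ≥0∞))⁻¹ ^ 2 ∂volume :=
          lintegral_add_left ((humeas y).pow_const 2) _
      _ ≤ (M + 1 : ℕ) * (4 * V) + (M + 1 : ℕ) * (4 * V) := by
          refine add_le_add (hsq y hy fun x hx => ?_) (hsq z hz fun x hx => ?_)
          · have := hx.2
            rw [Set.mem_union] at this; push_neg at this
            have h := this.1; rw [mem_ball, dist_eq_norm] at h; push_neg at h; exact h
          · have := hx.2
            rw [Set.mem_union] at this; push_neg at this
            have h := this.2; rw [mem_ball, dist_eq_norm] at h; push_neg at h; exact h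
  -- combine
  have hcomb : ∫⁻ x in B, ((‖x - y‖₊ : ℝ≥0∞))⁻¹ * ((‖x - z‖₊ : ℝ≥0∞))⁻¹ ∂volume
      ≤ ((M : ℝ≥0∞) + 2) * (8 * V) := by
    calc ∫⁻ x in B, ((‖x - y‖₊ : ℝ≥0∞))⁻¹ * ((‖x - z‖₊ : ℝ≥0∞))⁻¹ ∂volume
        ≤ ∫⁻ x in S3 ∪ (ball y a ∪ ball z a),
            ((‖x - y‖₊ : ℝ≥0∞))⁻¹ * ((‖x - z‖₊ : ℝ≥0∞))⁻¹ ∂volume :=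
          lintegral_mono_set (Set.subset_diff_union _ _)
      _ ≤ (∫⁻ x in S3, ((‖x - y‖₊ : ℝ≥0∞))⁻¹ * ((‖x - z‖₊ : ℝ≥0∞))⁻¹ ∂volume)
          + ∫⁻ x in ball y a ∪ ball z a,
            ((‖x - y‖₊ : ℝ≥0∞))⁻¹ * ((‖x - z‖₊ : ℝ≥0∞))⁻¹ ∂volume :=
          lintegral_union_le _ _ _
      _ ≤ ((M + 1 : ℕ) * (4 * V) + (M + 1 : ℕ) * (4 * V)) + ((4 * V) + (4 * V)) := by
          refine add_le_add hP3 (le_trans (lintegral_union_le _ _ _) (add_le_add hP1 hP2))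
      _ = ((M : ℝ≥0∞) + 2) * (8 * V) := by
          push_cast
          ring
  refine hcomb.trans (mul_le_mul_left ?_ _)
  -- numeric estimate
  have h4R : (1 : ℝ) < 4 * R / d := by
    rw [lt_div_iff₀ hd]; linarith
  have hw0 : 0 ≤ Real.logb 2 (4 * R / d) := Real.logb_nonneg one_lt_two h4R.le
  have hMw : (M : ℝ) < Real.logb 2 (4 * R / d) + 1 := by
    have : (2 * R) / a = 4 * R / d := by
      rw [ha_def]; field_simp; ring
    rw [hM, this]
    exact Nat.ceil_lt_add_one hw0
  have hlogb : Real.logb 2 (4 * R / d) ≤ Real.log (4 * R) / Real.log 2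
      + (Real.log 2)⁻¹ * |Real.log d| := by
    rw [Real.logb, Real.log_div (by positivity) hd.ne']
    rw [sub_div]
    have h2 : (0 : ℝ) < Real.log 2 := Real.log_pos one_lt_two
    have : -(Real.log d / Real.log 2) ≤ (Real.log 2)⁻¹ * |Real.log d| := by
      have heq : -(Real.log d / Real.log 2) = (Real.log 2)⁻¹ * (-(Real.log d)) := by ring
      rw [heq]
      refine mul_le_mul_of_nonneg_left ?_ (by positivity)
      linarith [neg_abs_le (Real.log d)]
    linarith
  have hfinal : (M : ℝ) + 2 ≤ Real.log (4 * R) / Real.log 2 + 3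
      + (Real.log 2)⁻¹ * |Real.log d| := by linarith
  calc (M : ℝ≥0∞) + 2 = ENNReal.ofReal ((M : ℝ) + 2) := by
        rw [ENNReal.ofReal_add (by positivity) (by norm_num), ENNReal.ofReal_natCast,
          ENNReal.ofReal_ofNat]
    _ ≤ _ := ENNReal.ofReal_le_ofReal hfinal


lemma not_integrable_diag {B : Set E2} {c : E2} {ε : ℝ} (hε : 0 < ε)
    (hcB : closedBall c ε ⊆ B) :
    ¬ IntegrableOn (fun x : E2 =>
        (inner ℝ ((‖x - c‖ ^ 2)⁻¹ • (x - c)) ((‖x - c‖ ^ 2)⁻¹ • (x - c)) : ℝ)) B := by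
  intro h
  set f := fun x : E2 =>
    (inner ℝ ((‖x - c‖ ^ 2)⁻¹ • (x - c)) ((‖x - c‖ ^ 2)⁻¹ • (x - c)) : ℝ) with hf
  set A : ℕ → Set E2 := fun n =>
    closedBall c (ε / 2 ^ n) \ closedBall c (ε / 2 ^ (n + 1)) with hA
  set δ := V - ENNReal.ofReal (1/4) * V with hδ
  have hδ0 : δ ≠ 0 := by
    rw [hδ, ← pos_iff_ne_zero, tsub_pos_iff_lt]
    calc ENNReal.ofReal (1/4) * V < 1 * V :=
          ENNReal.mul_lt_mul_left V_ne_zero V_ne_top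
            (ENNReal.ofReal_lt_one.mpr (by norm_num))
      _ = V := one_mul V
  have hAm : ∀ n, MeasurableSet (A n) := fun n =>
    measurableSet_closedBall.diff measurableSet_closedBall
  have hrad : ∀ m n : ℕ, m ≤ n → ε / 2 ^ n ≤ ε / 2 ^ m := fun m n hmn =>
    div_le_div_of_nonneg_left hε.le (by positivity) (pow_le_pow_right₀ one_le_two hmn)
  have hdisj : Pairwise (Function.onFun Disjoint A) := by
    have key : ∀ m n, m < n → Disjoint (A m) (A n) := by
      intro m n hmn
      refine Set.disjoint_left.mpr fun x hxm hxn => ?_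
      exact hxm.2 (closedBall_subset_closedBall (hrad (m+1) n hmn) hxn.1)
    intro m n hmn
    rcases hmn.lt_or_gt with hlt | hlt
    · exact key m n hlt
    · exact (key n m hlt).symm
  have hlow : ∀ n : ℕ, δ ≤ ∫⁻ x in A n, (‖f x‖₊ : ℝ≥0∞) ∂volume := by
    intro n
    set q := ENNReal.ofReal ((ε / 2 ^ n) ^ 2) with hq
    have hq0 : q ≠ 0 := (ENNReal.ofReal_pos.mpr (by positivity)).ne'
    have hqt : q ≠ ⊤ := ENNReal.ofReal_ne_top
    have hvol : volume (A n) = q * δ := by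
      have hmono := closedBall_subset_closedBall
        (x := c) (hrad n (n+1) (Nat.le_succ n))
      rw [hA]
      simp only
      rw [measure_diff hmono measurableSet_closedBall.nullMeasurableSet
          ((measure_mono hmono).trans_lt measure_closedBall_lt_top).ne,
        vol_closedBall c (by positivity), vol_closedBall c (by positivity)]
      have h14 : (ε / 2 ^ (n + 1)) ^ 2 = (ε / 2 ^ n) ^ 2 * (1/4) := by
        field_simp
        ring
      rw [h14, ENNReal.ofReal_mul (by positivity), hδ,
        ENNReal.mul_sub (fun _ _ => hqt), ← hq, mul_assoc]
    have hpt : ∀ x ∈ A n, q⁻¹ ≤ (‖f x‖₊ : ℝ≥0∞) := by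
      intro x hx
      have ht1 : ‖x - c‖ ≤ ε / 2 ^ n := by
        have := hx.1; rwa [mem_closedBall, dist_eq_norm] at this
      have ht0 : 0 < ‖x - c‖ := by
        have h2 := hx.2
        rw [mem_closedBall, dist_eq_norm] at h2
        push_neg at h2
        exact lt_of_le_of_lt (by positivity) h2
      have hfx : f x = (‖x - c‖ ^ 2)⁻¹ := by
        rw [hf]
        simp only
        rw [real_inner_self_eq_norm_sq, norm_smul]
        rw [Real.norm_eq_abs, abs_of_nonneg (by positivity)]
        field_simp
      rw [hfx, ← enorm_eq_nnnorm, Real.enorm_eq_ofReal_abs, abs_of_nonneg (by positivity), hq,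
        ← ENNReal.ofReal_inv_of_pos (by positivity)]
      refine ENNReal.ofReal_le_ofReal ?_
      refine inv_anti₀ (by positivity) ?_
      exact pow_le_pow_left₀ ht0.le ht1 2
    calc δ = q⁻¹ * (q * δ) := by
          rw [← mul_assoc, ENNReal.inv_mul_cancel hq0 hqt, one_mul]
      _ = q⁻¹ * volume (A n) := by rw [hvol]
      _ = ∫⁻ _x in A n, q⁻¹ ∂volume := (setLIntegral_const _ _).symm
      _ ≤ ∫⁻ x in A n, (‖f x‖₊ : ℝ≥0∞) ∂volume := setLIntegral_mono' (hAm n) hpt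
  have hsub : (⋃ n, A n) ⊆ B := by
    refine Set.iUnion_subset fun n => ?_
    refine Set.Subset.trans diff_subset (Set.Subset.trans (closedBall_subset_closedBall ?_) hcB)
    calc ε / 2 ^ n ≤ ε / 2 ^ 0 := hrad 0 n (Nat.zero_le n)
      _ = ε := by norm_num
  have htop : (⊤ : ℝ≥0∞) ≤ ∫⁻ x in B, (‖f x‖₊ : ℝ≥0∞) ∂volume := by
    calc (⊤ : ℝ≥0∞) = ∑' _n : ℕ, δ := (ENNReal.tsum_const_eq_top_of_ne_zero hδ0).symm
      _ ≤ ∑' n, ∫⁻ x in A n, (‖f x‖₊ : ℝ≥0∞) ∂volume := ENNReal.tsum_le_tsum hlow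
      _ = ∫⁻ x in ⋃ n, A n, (‖f x‖₊ : ℝ≥0∞) ∂volume :=
          (lintegral_iUnion hAm hdisj _).symm
      _ ≤ ∫⁻ x in B, (‖f x‖₊ : ℝ≥0∞) ∂volume := lintegral_mono_set hsub
  exact (htop.trans_lt h.2).false


lemma smul_norm_le (x w : E2) :
    ENNReal.ofReal ‖(‖x - w‖ ^ 2)⁻¹ • (x - w)‖ ≤ ((‖x - w‖₊ : ℝ≥0∞))⁻¹ := by
  rcases eq_or_ne x w with h | h
  · simp [h]
  · have ht0 : 0 < ‖x - w‖ := norm_pos_iff.mpr (sub_ne_zero.mpr h)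
    have : ‖(‖x - w‖ ^ 2)⁻¹ • (x - w)‖ = ‖x - w‖⁻¹ := by
      rw [norm_smul, Real.norm_eq_abs, abs_of_nonneg (by positivity)]
      field_simp
    rw [this, ENNReal.ofReal_inv_of_pos ht0, ofReal_norm, enorm_eq_nnnorm]

end Stmt4Aux
end

open Stmt4Aux Metric

set_option maxHeartbeats 2000000

/-- If `μ` is a probability measure supported in a compact `K ⊆ B ⊆ ℝ²`
(`B` bounded open) with finite logarithmic energy, then
`β(y,z) = ∫_B (x-y)/|x-y|² · (x-z)/|x-z|² dx` belongs to `L¹(B×B, μ⊗μ)`. -/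
theorem stmt4
    (K B : Set (EuclideanSpace ℝ (Fin 2))) (hK : IsCompact K)
    (hBopen : IsOpen B) (hBbd : Bornology.IsBounded B) (hKB : K ⊆ B)
    (μ : Measure (EuclideanSpace ℝ (Fin 2))) [IsProbabilityMeasure μ]
    (hμK : μ Kᶜ = 0)
    (henergy : Integrable
      (fun p : EuclideanSpace ℝ (Fin 2) × EuclideanSpace ℝ (Fin 2) =>
        Real.log ‖p.1 - p.2‖) (μ.prod μ)) :
    Integrable
      (fun p : EuclideanSpace ℝ (Fin 2) × EuclideanSpace ℝ (Fin 2) =>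
        ∫ x in B, ⟪(‖x - p.1‖ ^ 2)⁻¹ • (x - p.1), (‖x - p.2‖ ^ 2)⁻¹ • (x - p.2)⟫)
      (μ.prod μ) := by
  classical
  obtain ⟨r, hr⟩ := hBbd.subset_ball (0 : E2)
  set R := max r 1 with hRdef
  have hR1 : (1 : ℝ) ≤ R := le_max_right _ _
  have hBR : B ⊆ ball (0 : E2) R := hr.trans (ball_subset_ball (le_max_left _ _))
  have hBm : MeasurableSet B := hBopen.measurableSet
  set β := fun p : E2 × E2 =>
    ∫ x in B, ⟪(‖x - p.1‖ ^ 2)⁻¹ • (x - p.1), (‖x - p.2‖ ^ 2)⁻¹ • (x - p.2)⟫ with hβ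
  have hC0 : 0 ≤ Real.log (4 * R) / Real.log 2 + 3 := by
    have h1 : 0 ≤ Real.log (4 * R) := Real.log_nonneg (by linarith)
    have h2 : 0 < Real.log 2 := Real.log_pos one_lt_two
    positivity
  set c1 : ℝ≥0∞ := ENNReal.ofReal (Real.log (4 * R) / Real.log 2 + 3) * (8 * V) with hc1
  set c2 : ℝ≥0∞ := ENNReal.ofReal (Real.log 2)⁻¹ * (8 * V) with hc2
  have hc1t : c1 ≠ ⊤ := by
    rw [hc1]
    exact ENNReal.mul_ne_top ENNReal.ofReal_ne_top (ENNReal.mul_ne_top ENNReal.ofNat_ne_top V_ne_top)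
  have hc2t : c2 ≠ ⊤ := by
    rw [hc2]
    exact ENNReal.mul_ne_top ENNReal.ofReal_ne_top (ENNReal.mul_ne_top ENNReal.ofNat_ne_top V_ne_top)
  refine ⟨?_, ?_⟩
  · -- measurability
    have hG : StronglyMeasurable (fun q : (E2 × E2) × E2 =>
        (⟪(‖q.2 - q.1.1‖ ^ 2)⁻¹ • (q.2 - q.1.1),
          (‖q.2 - q.1.2‖ ^ 2)⁻¹ • (q.2 - q.1.2)⟫ : ℝ)) := by
      apply Measurable.stronglyMeasurable
      have h1 : Measurable fun q : (E2 × E2) × E2 => q.2 - q.1.1 :=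
        measurable_snd.sub (measurable_fst.fst)
      have h2 : Measurable fun q : (E2 × E2) × E2 => q.2 - q.1.2 :=
        measurable_snd.sub (measurable_fst.snd)
      exact Measurable.inner (((h1.norm.pow_const 2).inv).smul h1)
        (((h2.norm.pow_const 2).inv).smul h2)
    exact (hG.integral_prod_right').aestronglyMeasurable
  · -- finite integral
    have haeK : ∀ᵐ p ∂(μ.prod μ), p.1 ∈ K ∧ p.2 ∈ K := by
      rw [MeasureTheory.ae_iff]
      refine measure_mono_null (t := (Kᶜ ×ˢ Set.univ) ∪ (Set.univ ×ˢ Kᶜ)) ?_ ?_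
      · intro p hp
        simp only [Set.mem_setOf_eq, not_and_or] at hp
        rcases hp with hp | hp
        · exact Or.inl ⟨hp, Set.mem_univ _⟩
        · exact Or.inr ⟨Set.mem_univ _, hp⟩
      · refine le_antisymm ((measure_union_le _ _).trans ?_) (zero_le)
        rw [Measure.prod_prod, Measure.prod_prod, hμK]
        simp
    have hbound : ∀ᵐ p ∂(μ.prod μ),
        (‖β p‖₊ : ℝ≥0∞) ≤ c1 + c2 * ‖Real.log ‖p.1 - p.2‖‖₊ := by
      filter_upwards [haeK] with p hp
      rcases eq_or_ne p.1 p.2 with heq | hne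
      · have hzero : β p = 0 := by
          rw [hβ]
          simp only
          rw [← heq]
          apply integral_undef
          obtain ⟨ε, hε, hball⟩ := Metric.isOpen_iff.mp hBopen p.1 (hKB hp.1)
          exact not_integrable_diag (by linarith : (0:ℝ) < ε / 2)
            ((closedBall_subset_ball (by linarith)).trans hball)
        rw [hzero]
        simp
      · have key := pointwise_bound hBm hR1 hBR (hBR (hKB hp.1)) (hBR (hKB hp.2)) hne
        have hptw : ∀ x : E2,
            (‖(⟪(‖x - p.1‖ ^ 2)⁻¹ • (x - p.1), (‖x - p.2‖ ^ 2)⁻¹ • (x - p.2)⟫ : ℝ)‖₊ : ℝ≥0∞)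
              ≤ ((‖x - p.1‖₊ : ℝ≥0∞))⁻¹ * ((‖x - p.2‖₊ : ℝ≥0∞))⁻¹ := by
          intro x
          rw [← enorm_eq_nnnorm, Real.enorm_eq_ofReal_abs]
          calc ENNReal.ofReal |⟪(‖x - p.1‖ ^ 2)⁻¹ • (x - p.1), (‖x - p.2‖ ^ 2)⁻¹ • (x - p.2)⟫|
              ≤ ENNReal.ofReal (‖(‖x - p.1‖ ^ 2)⁻¹ • (x - p.1)‖
                  * ‖(‖x - p.2‖ ^ 2)⁻¹ • (x - p.2)‖) :=
                ENNReal.ofReal_le_ofReal (abs_real_inner_le_norm _ _)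
            _ = ENNReal.ofReal ‖(‖x - p.1‖ ^ 2)⁻¹ • (x - p.1)‖
                  * ENNReal.ofReal ‖(‖x - p.2‖ ^ 2)⁻¹ • (x - p.2)‖ :=
                ENNReal.ofReal_mul (norm_nonneg _)
            _ ≤ _ := mul_le_mul' (smul_norm_le x p.1) (smul_norm_le x p.2)
        calc (‖β p‖₊ : ℝ≥0∞)
            ≤ ∫⁻ x in B, (‖(⟪(‖x - p.1‖ ^ 2)⁻¹ • (x - p.1),
                (‖x - p.2‖ ^ 2)⁻¹ • (x - p.2)⟫ : ℝ)‖₊ : ℝ≥0∞) ∂volume :=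
              enorm_integral_le_lintegral_enorm _
          _ ≤ ∫⁻ x in B, ((‖x - p.1‖₊ : ℝ≥0∞))⁻¹ * ((‖x - p.2‖₊ : ℝ≥0∞))⁻¹ ∂volume :=
              lintegral_mono fun x => hptw x
          _ ≤ ENNReal.ofReal (Real.log (4 * R) / Real.log 2 + 3
                + (Real.log 2)⁻¹ * |Real.log ‖p.1 - p.2‖|) * (8 * V) := key
          _ ≤ c1 + c2 * ‖Real.log ‖p.1 - p.2‖‖₊ := by
              rw [ENNReal.ofReal_add hC0 (by positivity), add_mul, hc1, hc2]
              refine add_le_add_right ?_ _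
              rw [ENNReal.ofReal_mul (by positivity), ← enorm_eq_nnnorm, Real.enorm_eq_ofReal_abs]
              ring_nf
              exact le_refl _
    rw [HasFiniteIntegral]
    calc ∫⁻ p, (‖β p‖₊ : ℝ≥0∞) ∂(μ.prod μ)
        ≤ ∫⁻ p, (c1 + c2 * ‖Real.log ‖p.1 - p.2‖‖₊) ∂(μ.prod μ) :=
          lintegral_mono_ae hbound
      _ = c1 + c2 * ∫⁻ p, (‖Real.log ‖p.1 - p.2‖‖₊ : ℝ≥0∞) ∂(μ.prod μ) := by
          rw [lintegral_add_left measurable_const, lintegral_const,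
            lintegral_const_mul' _ _ hc2t, measure_univ, mul_one]
      _ < ⊤ := by
          refine ENNReal.add_lt_top.mpr ⟨hc1t.lt_top, ?_⟩
          exact ENNReal.mul_lt_top hc2t.lt_top henergy.2
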